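/- Let S be a semigroup, σ : S → S an involutive automorphism, and μ a finite linear combination of Dirac measures at central points, given by a finite index set I, constants c_i ∈ ℂ, and elements z_i ∈ Z(S). Suppose f, g : S → ℂ satisfy ∑_{i∈I} c_i f(x y z_i) + ∑_{i∈I} c_i f(σ(y) x z_i) = 2 f(x) g(y) for all x, y ∈ S, with f ≠ 0 and g ≠ 0, and suppose ∑_{i∈I} c_i g(z_i) ≠ 0. Define F(x) := (∑_{i∈I} c_i f(x z_i)) / (∑_{j∈I} c_j g(z_j)) and G(x) := (∑_{i∈I} c_i g(x z_i) + ∑_{i∈I} c_i g(x σ(z_i))) / (2 ∑_{j∈I} c_j g(z_j)). Then G ≠ 0 and F(xy) + F(σ(y)x) = 2 F(x) G(y) for all x, y ∈ S. -/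

import Mathlib

/-- Lemma: if `(f, g)` solves the Kannappan–Wilson equation with `f ≠ 0`, `g ≠ 0`
and `∑ᵢ cᵢ g(zᵢ) ≠ 0`, then with
`F(x) = (∑ᵢ cᵢ f(x zᵢ)) / ∑ⱼ cⱼ g(zⱼ)` and
`G(x) = (∑ᵢ cᵢ g(x zᵢ) + ∑ᵢ cᵢ g(x σ(zᵢ))) / (2 ∑ⱼ cⱼ g(zⱼ))`
one has `G ≠ 0` and `F(xy) + F(σ(y)x) = 2 F(x) G(y)`. -/
theorem kannappan_wilson_reduction {S : Type*} [Semigroup S] (σ : S → S)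
    (hσmul : ∀ x y : S, σ (x * y) = σ x * σ y) (hσinv : ∀ x : S, σ (σ x) = x)
    {ι : Type*} [Fintype ι] (c : ι → ℂ) (z : ι → S)
    (hz : ∀ (i : ι) (x : S), x * z i = z i * x)
    (f g : S → ℂ) (hf : f ≠ 0) (hg : g ≠ 0)
    (heq : ∀ x y : S,
      (∑ i, c i * f (x * y * z i)) + (∑ i, c i * f (σ y * x * z i)) = 2 * f x * g y)
    (hgz : (∑ j, c j * g (z j)) ≠ 0)
    (F G : S → ℂ)
    (hF : ∀ x : S, F x = (∑ i, c i * f (x * z i)) / (∑ j, c j * g (z j)))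
    (hG : ∀ x : S, G x =
      ((∑ i, c i * g (x * z i)) + (∑ i, c i * g (x * σ (z i)))) /
        (2 * ∑ j, c j * g (z j))) :
    G ≠ 0 ∧ ∀ x y : S, F (x * y) + F (σ y * x) = 2 * F x * G y := by
  obtain ⟨x₀, hx₀⟩ : ∃ x, f x ≠ 0 := by
    by_contra h; push_neg at h; exact hf (funext h)
  obtain ⟨y₀, hy₀⟩ : ∃ y, g y ≠ 0 := by
    by_contra h; push_neg at h; exact hg (funext h)
  have hzσ : ∀ (i : ι) (x : S), x * σ (z i) = σ (z i) * x := by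
    intro i x
    have h := congrArg σ (hz i (σ x))
    rwa [hσmul, hσmul, hσinv] at h
  have hsl : ∀ (i : ι) (a b : S), a * z i * b = a * b * z i := by
    intro i a b; rw [mul_assoc, ← hz i b, ← mul_assoc]
  have hslσ : ∀ (i : ι) (a b : S), a * σ (z i) * b = a * b * σ (z i) := by
    intro i a b; rw [mul_assoc, ← hzσ i b, ← mul_assoc]
  -- per-k key identity
  have key1 : ∀ (x y : S) (k : ι),
      2 * f (x * z k) * g y + 2 * f (x * σ (z k)) * g y
        = 2 * f x * g (y * z k) + 2 * f x * g (y * σ (z k)) := by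
    intro x y k
    have h1 := heq (x * z k) y
    have h2 := heq (x * σ (z k)) y
    have h3 := heq x (y * z k)
    have h4 := heq x (y * σ (z k))
    have r1 : ∀ i : ι, x * z k * y * z i = x * y * z k * z i := fun i => by
      rw [hsl k x y]
    have r2 : ∀ i : ι, σ y * (x * z k) * z i = σ y * x * z k * z i := fun i => by
      rw [← mul_assoc (σ y) x (z k)]
    have r3 : ∀ i : ι, x * σ (z k) * y * z i = x * y * σ (z k) * z i := fun i => by
      rw [hslσ k x y]
    have r4 : ∀ i : ι, σ y * (x * σ (z k)) * z i = σ y * x * σ (z k) * z i := fun i => by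
      rw [← mul_assoc (σ y) x (σ (z k))]
    have r5 : ∀ i : ι, x * (y * z k) * z i = x * y * z k * z i := fun i => by
      rw [← mul_assoc x y (z k)]
    have r6 : ∀ i : ι, σ (y * z k) * x * z i = σ y * x * σ (z k) * z i := fun i => by
      rw [hσmul, hslσ k (σ y) x]
    have r7 : ∀ i : ι, x * (y * σ (z k)) * z i = x * y * σ (z k) * z i := fun i => by
      rw [← mul_assoc x y (σ (z k))]
    have r8 : ∀ i : ι, σ (y * σ (z k)) * x * z i = σ y * x * z k * z i := fun i => by
      rw [hσmul, hσinv, hsl k (σ y) x]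
    simp only [r1, r2] at h1
    simp only [r3, r4] at h2
    simp only [r5, r6] at h3
    simp only [r7, r8] at h4
    linear_combination h3 + h4 - h1 - h2
  -- summed version
  have hstar : ∀ x y : S,
      ((∑ i, c i * f (x * z i)) + ∑ i, c i * f (x * σ (z i))) * g y
        = f x * ((∑ i, c i * g (y * z i)) + ∑ i, c i * g (y * σ (z i))) := by
    intro x y
    have hs : ∑ k, c k * (2 * f (x * z k) * g y + 2 * f (x * σ (z k)) * g y)
        = ∑ k, c k * (2 * f x * g (y * z k) + 2 * f x * g (y * σ (z k))) :=
      Finset.sum_congr rfl fun k _ => by rw [key1 x y k]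
    have e1 : ∑ k, c k * (2 * f (x * z k) * g y + 2 * f (x * σ (z k)) * g y)
        = 2 * (((∑ i, c i * f (x * z i)) + ∑ i, c i * f (x * σ (z i))) * g y) := by
      rw [add_mul, mul_add]
      simp only [Finset.sum_mul, Finset.mul_sum]
      rw [← Finset.sum_add_distrib]
      exact Finset.sum_congr rfl fun k _ => by ring
    have e2 : ∑ k, c k * (2 * f x * g (y * z k) + 2 * f x * g (y * σ (z k)))
        = 2 * (f x * ((∑ i, c i * g (y * z i)) + ∑ i, c i * g (y * σ (z i)))) := by
      rw [mul_add (f x), mul_add (2 : ℂ)]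
      simp only [Finset.mul_sum]
      rw [← Finset.sum_add_distrib]
      exact Finset.sum_congr rfl fun k _ => by ring
    have := e1.symm.trans (hs.trans e2)
    exact mul_left_cancel₀ two_ne_zero this
  obtain ⟨lam, hlamdef⟩ : ∃ l : ℂ,
      l = ((∑ i, c i * g (y₀ * z i)) + ∑ i, c i * g (y₀ * σ (z i))) / g y₀ := ⟨_, rfl⟩
  have hlam : ∀ x : S,
      (∑ i, c i * f (x * z i)) + (∑ i, c i * f (x * σ (z i))) = f x * lam := by
    intro x
    have h := hstar x y₀
    rw [hlamdef]
    field_simp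
    linear_combination h
  have hBlam : ∀ y : S,
      (∑ i, c i * g (y * z i)) + (∑ i, c i * g (y * σ (z i))) = lam * g y := by
    intro y
    have h := hstar x₀ y
    rw [hlam x₀] at h
    have h' : f x₀ * (lam * g y)
        = f x₀ * ((∑ i, c i * g (y * z i)) + ∑ i, c i * g (y * σ (z i))) := by
      linear_combination h
    exact (mul_left_cancel₀ hx₀ h').symm
  have hkk : ∀ (x : S) (k : ι),
      (∑ i, c i * f (x * z k * z i)) + (∑ i, c i * f (x * σ (z k) * z i))
        = 2 * f x * g (z k) := by
    intro x k
    have h := heq x (z k)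
    have r : ∀ i : ι, σ (z k) * x * z i = x * σ (z k) * z i := fun i => by
      rw [← hzσ k x]
    simp only [r] at h
    exact h
  have hlamA : ∀ x : S, lam * (∑ i, c i * f (x * z i)) = 2 * (∑ j, c j * g (z j)) * f x := by
    intro x
    have step1 : lam * (∑ i, c i * f (x * z i))
        = ∑ i, c i * ((∑ k, c k * f (x * z i * z k)) + ∑ k, c k * f (x * z i * σ (z k))) := by
      rw [Finset.mul_sum]
      refine Finset.sum_congr rfl fun i _ => ?_
      rw [hlam (x * z i)]
      ring
    have step2 : ∑ i, c i * ((∑ k, c k * f (x * z i * z k)) + ∑ k, c k * f (x * z i * σ (z k)))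
        = (∑ i, ∑ k, c i * (c k * f (x * z i * z k)))
          + ∑ i, ∑ k, c i * (c k * f (x * z i * σ (z k))) := by
      rw [← Finset.sum_add_distrib]
      exact Finset.sum_congr rfl fun i _ => by
        rw [mul_add, Finset.mul_sum, Finset.mul_sum]
    have step3 : (∑ i, ∑ k, c i * (c k * f (x * z i * σ (z k))))
        = ∑ i, ∑ k, c i * (c k * f (x * σ (z i) * z k)) := by
      have r : ∀ i k : ι, x * z i * σ (z k) = x * σ (z k) * z i := fun i k =>
        hsl i x (σ (z k))
      simp only [r]
      rw [Finset.sum_comm]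
      exact Finset.sum_congr rfl fun i _ => Finset.sum_congr rfl fun k _ => by ring
    have step4 : (∑ i, ∑ k, c i * (c k * f (x * z i * z k)))
          + (∑ i, ∑ k, c i * (c k * f (x * σ (z i) * z k)))
        = ∑ i, c i * (2 * f x * g (z i)) := by
      rw [← Finset.sum_add_distrib]
      refine Finset.sum_congr rfl fun i _ => ?_
      rw [← Finset.mul_sum, ← Finset.mul_sum, ← mul_add, hkk x i]
    have step5 : ∑ i, c i * (2 * f x * g (z i)) = 2 * (∑ j, c j * g (z j)) * f x := by
      simp only [Finset.mul_sum, Finset.sum_mul]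
      exact Finset.sum_congr rfl fun i _ => by ring
    rw [step1, step2, step3, step4, step5]
  have hlamne : lam ≠ 0 := by
    intro h
    have h2 := hlamA x₀
    rw [h, zero_mul] at h2
    have : (2 : ℂ) * (∑ j, c j * g (z j)) * f x₀ ≠ 0 :=
      mul_ne_zero (mul_ne_zero two_ne_zero hgz) hx₀
    exact this h2.symm
  constructor
  · intro h
    have hGy : G y₀ = 0 := by rw [h]; simp
    rw [hG y₀, hBlam y₀] at hGy
    have h2N : (2 : ℂ) * (∑ j, c j * g (z j)) ≠ 0 := mul_ne_zero two_ne_zero hgz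
    have : lam * g y₀ = 0 := by
      rcases div_eq_zero_iff.mp hGy with h' | h'
      · exact h'
      · exact absurd h' h2N
    rcases mul_eq_zero.mp this with h' | h'
    · exact hlamne h'
    · exact hy₀ h'
  · intro x y
    rw [hF (x * y), hF (σ y * x), hF x, hG y, hBlam y]
    rw [← add_div, heq x y]
    have hA := hlamA x
    field_simp
    linear_combination (-g y) * hA
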